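/- Let M be a given consumer rate budget. There exist a positive integer N₀ and constants k_infl > 0 and ε₀ > 0 such that if N > N₀ and M_infl > N·k_infl, then the following is true: if Ω* = (μ*_infl, Λ*, X*) is a Nash equilibrium of the proxy game (with the tie-break convention that if Σ_{y∈C} μ*(y_infl|y) = 0 then μ*_infl(z) = M_infl/N for all z), then every consumer follows the influencer with rate μ*(y_infl|y) > ε₀ for all y ∈ C. -/

import Mathlib

open scoped Classical

noncomputable section

/-- Points of the `d`-dimensional Euclidean space. -/
abbrev E (d : ℕ) : Type := EuclideanSpace ℝ (Fin d)

/-- An allocation `Ω = (μ_infl, Λ, X)`: `muI z` is the rate with which the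
influencer follows producer `z`; `mu z y` is the rate with which consumer `y`
follows producer `z` directly; `muY y` is the rate with which consumer `y`
follows the influencer; `lam y` is the rate with which consumer `y` follows
outside sources; `X z` is the content topic created by producer `z`. -/
structure Alloc (d : ℕ) where
  muI : E d → ℝ
  mu  : E d → E d → ℝ
  muY : E d → ℝ
  lam : E d → ℝ
  X   : E d → E d

variable (d : ℕ)

/-- Admissibility of an allocation: nonnegative rates, the rate budget `M_infl`
of the influencer, the rate budget `M` of each consumer, and contents in `T`. -/
def Admissible (T : Set (E d)) (C : Finset (E d)) (Minfl M : ℝ) (Ω : Alloc d) : Prop :=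
  (∀ z ∈ C, 0 ≤ Ω.muI z) ∧ ((∑ z ∈ C, Ω.muI z) ≤ Minfl) ∧
  (∀ y ∈ C, (∀ z ∈ C.erase y, 0 ≤ Ω.mu z y) ∧ 0 ≤ Ω.muY y ∧ 0 ≤ Ω.lam y ∧
    ((∑ z ∈ C.erase y, Ω.mu z y) + Ω.muY y + Ω.lam y ≤ M)) ∧
  (∀ z ∈ C, Ω.X z ∈ T)

/-- `B(z|y) = q(x(z)|z) · p(x(z)|y)` where `p(x|y) = f(d(x,y))`, `q(x|y) = g(d(x,y))`. -/
def Bfun (f g : ℝ → ℝ) (Ω : Alloc d) (z y : E d) : ℝ :=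
  g (dist (Ω.X z) z) * f (dist (Ω.X z) y)

/-- The consumption utility `U_c(y|Ω)` of consumer `y`. -/
def Uc (f g I : ℝ → ℝ) (C : Finset (E d)) (rp r0 B0 : ℝ) (Ω : Alloc d) (y : E d) : ℝ :=
  rp * ∑ z ∈ C.erase y, Bfun d f g Ω z y * I (Ω.muI z) * I (Ω.muY y)
  + rp * ∑ z ∈ C.erase y, Bfun d f g Ω z y * I (Ω.mu z y)
  + r0 * B0 * I (Ω.lam y)

/-- The influencer utility `U_infl(μ_infl|Λ,X)`. -/
def Uinfl (f g I : ℝ → ℝ) (C : Finset (E d)) (rp : ℝ) (Ω : Alloc d) : ℝ :=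
  rp * ∑ z ∈ C, ∑ y ∈ C.erase z, Bfun d f g Ω z y * I (Ω.muI z) * I (Ω.muY y)

/-- The producer utility (social support) `U_p(z|Ω)` of producer `z`. -/
def Up (f g I : ℝ → ℝ) (C : Finset (E d)) (rp : ℝ) (Ω : Alloc d) (z : E d) : ℝ :=
  rp * ∑ y ∈ C.erase z, Bfun d f g Ω z y * I (Ω.muI z) * I (Ω.muY y)
  + rp * ∑ y ∈ C.erase z, Bfun d f g Ω z y * I (Ω.mu z y)

/-- The social welfare `Φ(Ω) = Σ_{y∈C} U_c(y|Ω)`. -/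
def Phi (f g I : ℝ → ℝ) (C : Finset (E d)) (rp r0 B0 : ℝ) (Ω : Alloc d) : ℝ :=
  ∑ y ∈ C, Uc d f g I C rp r0 B0 Ω y

/-- The allocation obtained from `Ω` when consumer `y` unilaterally deviates to
the rates `(mu', muY', lam')`. -/
def consDeviate (Ω : Alloc d) (y : E d) (mu' : E d → ℝ) (muY' lam' : ℝ) : Alloc d :=
  { Ω with
    mu := fun z w => if w = y then mu' z else Ω.mu z w,
    muY := Function.update Ω.muY y muY',
    lam := Function.update Ω.lam y lam' }

/-- The influencer's rates are a best response: no feasible deviation of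
`μ_infl` increases the influencer utility. -/
def InflBR (f g I : ℝ → ℝ) (C : Finset (E d)) (rp Minfl : ℝ) (Ω : Alloc d) : Prop :=
  ∀ μI' : E d → ℝ, (∀ z ∈ C, 0 ≤ μI' z) → ((∑ z ∈ C, μI' z) ≤ Minfl) →
    Uinfl d f g I C rp { Ω with muI := μI' } ≤ Uinfl d f g I C rp Ω

/-- Consumer `y`'s rates are a best response in the game with perfect
information: no feasible deviation increases the consumption utility. -/
def ConsBR (f g I : ℝ → ℝ) (C : Finset (E d)) (rp r0 B0 M : ℝ) (Ω : Alloc d) (y : E d) : Prop :=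
  ∀ (mu' : E d → ℝ) (muY' lam' : ℝ),
    (∀ z ∈ C.erase y, 0 ≤ mu' z) → 0 ≤ muY' → 0 ≤ lam' →
    ((∑ z ∈ C.erase y, mu' z) + muY' + lam' ≤ M) →
    Uc d f g I C rp r0 B0 (consDeviate d Ω y mu' muY' lam') y ≤ Uc d f g I C rp r0 B0 Ω y

/-- Producer `z`'s content is a best response: no deviation of the content
topic within `T` increases the producer's social support. -/
def ProdBR (f g I : ℝ → ℝ) (T : Set (E d)) (C : Finset (E d)) (rp : ℝ) (Ω : Alloc d) (z : E d) : Prop :=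
  ∀ x ∈ T, Up d f g I C rp { Ω with X := Function.update Ω.X z x } z ≤ Up d f g I C rp Ω z

/-- Nash equilibrium of the game with perfect information. -/
def NashPerfect (f g I : ℝ → ℝ) (T : Set (E d)) (C : Finset (E d))
    (rp r0 B0 Minfl M : ℝ) (Ω : Alloc d) : Prop :=
  Admissible d T C Minfl M Ω ∧
  InflBR d f g I C rp Minfl Ω ∧
  (∀ y ∈ C, ConsBR d f g I C rp r0 B0 M Ω y) ∧
  (∀ z ∈ C, ProdBR d f g I T C rp Ω z)

/-- Admissibility in the proxy game: in addition, consumers follow no producer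
directly. -/
def ProxyAdmissible (T : Set (E d)) (C : Finset (E d)) (Minfl M : ℝ) (Ω : Alloc d) : Prop :=
  Admissible d T C Minfl M Ω ∧ ∀ y ∈ C, ∀ z ∈ C.erase y, Ω.mu z y = 0

/-- Consumer `y`'s rates are a best response in the proxy game, where the
consumer may only follow the influencer and outside sources. -/
def ProxyConsBR (f g I : ℝ → ℝ) (C : Finset (E d)) (rp r0 B0 M : ℝ) (Ω : Alloc d) (y : E d) : Prop :=
  ∀ (muY' lam' : ℝ), 0 ≤ muY' → 0 ≤ lam' → muY' + lam' ≤ M →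
    Uc d f g I C rp r0 B0 (consDeviate d Ω y (fun _ => 0) muY' lam') y ≤
      Uc d f g I C rp r0 B0 Ω y

/-- Nash equilibrium of the proxy game. -/
def NashProxy (f g I : ℝ → ℝ) (T : Set (E d)) (C : Finset (E d))
    (rp r0 B0 Minfl M : ℝ) (Ω : Alloc d) : Prop :=
  ProxyAdmissible d T C Minfl M Ω ∧
  InflBR d f g I C rp Minfl Ω ∧
  (∀ y ∈ C, ProxyConsBR d f g I C rp r0 B0 M Ω y) ∧
  (∀ z ∈ C, ProdBR d f g I T C rp Ω z)

/-- Tie-break convention (Assumption 4): if no consumer follows the influencer,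
the influencer splits its rate budget uniformly. -/
def TieBreak (C : Finset (E d)) (Minfl : ℝ) (Ω : Alloc d) : Prop :=
  (∑ y ∈ C, Ω.muY y) = 0 → ∀ z ∈ C, Ω.muI z = Minfl / (C.card : ℝ)

set_option maxHeartbeats 1000000 in
/-- **Proposition 8.** Let `M` be a given consumer rate budget.
There exist a positive integer `N₀` and constants `k_infl > 0` and `ε₀ > 0`
such that if `N > N₀` and `M_infl > N·k_infl`, then the following is true: if
`Ω* = (μ*_infl, Λ*, X*)` is a Nash equilibrium of the proxy game (with the
tie-break convention that if `Σ_{y∈C} μ*(y_infl|y) = 0` then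
`μ*_infl(z) = M_infl/N` for all `z`), then every consumer follows the
influencer with rate `μ*(y_infl|y) > ε₀` for all `y ∈ C`. -/
theorem stmt17 (d : ℕ) (f g I : ℝ → ℝ)
    (hf_cont : ContinuousOn f (Set.Ici 0)) (hf_anti : StrictAntiOn f (Set.Ici 0))
    (hf_rng : ∀ t ∈ Set.Ici (0 : ℝ), f t ∈ Set.Ioc (0 : ℝ) 1)
    (hg_cont : ContinuousOn g (Set.Ici 0)) (hg_anti : StrictAntiOn g (Set.Ici 0))
    (hg_rng : ∀ t ∈ Set.Ici (0 : ℝ), g t ∈ Set.Ioc (0 : ℝ) 1)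
    (hI_diff : ContDiffOn ℝ 1 I (Set.Ici 0))
    (hI_mono : StrictMonoOn I (Set.Ici 0))
    (hI_conc : StrictConcaveOn ℝ (Set.Ici 0) I)
    (hI_zero : I 0 = 0)
    (hI_lim : Filter.Tendsto I Filter.atTop (nhds 1))
    (T : Set (E d)) (hT_ne : T.Nonempty) (hT_conv : Convex ℝ T) (hT_comp : IsCompact T)
    (rp r0 B0 : ℝ) (hrp : 0 < rp) (hr0 : 0 < r0) (hB0 : 0 < B0)
    (M : ℝ) (hM : 0 < M) :
    ∃ (N₀ : ℕ) (kinfl ε₀ : ℝ), 0 < kinfl ∧ 0 < ε₀ ∧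
      ∀ C : Finset (E d), ↑C ⊆ T → N₀ < C.card →
        ∀ Minfl : ℝ, (C.card : ℝ) * kinfl < Minfl →
          ∀ Ω : Alloc d, NashProxy d f g I T C rp r0 B0 Minfl M Ω →
            TieBreak d C Minfl Ω →
            ∀ y ∈ C, ε₀ < Ω.muY y := by
  classical
  -- basic facts about I
  have hImono' : MonotoneOn I (Set.Ici 0) := hI_mono.monotoneOn
  have hInn : ∀ t : ℝ, 0 ≤ t → 0 ≤ I t := by
    intro t ht
    rw [← hI_zero]
    exact hImono' (Set.mem_Ici.2 le_rfl) (Set.mem_Ici.2 ht) ht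
  have hIlt1 : ∀ t : ℝ, 0 ≤ t → I t < 1 := by
    intro t ht
    have h1 : I t < I (t + 1) :=
      hI_mono (Set.mem_Ici.2 ht) (Set.mem_Ici.2 (by linarith)) (lt_add_one t)
    have h2 : I (t + 1) ≤ 1 := by
      refine ge_of_tendsto hI_lim ?_
      refine Filter.eventually_atTop.2 ⟨t + 1, fun s hs => ?_⟩
      exact hImono' (Set.mem_Ici.2 (by linarith)) (Set.mem_Ici.2 (by linarith)) hs
    linarith
  have hIhalf : 0 < I (M / 2) := by
    rw [← hI_zero]
    exact hI_mono (Set.mem_Ici.2 le_rfl) (Set.mem_Ici.2 (by linarith)) (by linarith)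
  have hI1 : 0 < I 1 := by
    rw [← hI_zero]
    exact hI_mono (Set.mem_Ici.2 le_rfl) (Set.mem_Ici.2 zero_le_one) one_pos
  -- the constant c
  have hD0 : (0 : ℝ) ≤ Metric.diam T := Metric.diam_nonneg
  obtain ⟨hfD0, hfD1⟩ := hf_rng _ (Set.mem_Ici.2 hD0)
  obtain ⟨hgD0, hgD1⟩ := hg_rng _ (Set.mem_Ici.2 hD0)
  set c : ℝ := g (Metric.diam T) * f (Metric.diam T) with hcdef
  have hc : 0 < c := mul_pos hgD0 hfD0
  have hc1 : c ≤ 1 := by nlinarith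
  have hTbd : Bornology.IsBounded T := hT_comp.isBounded
  -- ε₀ from continuity of I at 0
  have htend : Filter.Tendsto I (nhdsWithin 0 (Set.Ici 0)) (nhds 0) := by
    have := (hI_diff.continuousOn) 0 (Set.mem_Ici.2 le_rfl)
    simpa [ContinuousWithinAt, hI_zero] using this
  have hev : ∀ᶠ t in nhdsWithin 0 (Set.Ici 0), I t < I (M / 2) / 2 :=
    htend.eventually_lt_const (by linarith)
  obtain ⟨δ, hδ, hball⟩ := Metric.mem_nhdsWithin_iff.1 hev
  have hε₀pos : 0 < δ / 2 := by linarith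
  have hIε₀ : I (δ / 2) < I (M / 2) / 2 := by
    refine hball ⟨?_, Set.mem_Ici.2 hε₀pos.le⟩
    simp only [Metric.mem_ball, Real.dist_eq, sub_zero]
    rw [abs_of_pos hε₀pos]; linarith
  -- the constant req and N₀
  set req : ℝ := 2 * (r0 * B0) / (rp * I (M / 2)) with hreqdef
  have hreqpos : 0 < req := by positivity
  refine ⟨⌈(req / c + 1) / (c * I 1)⌉₊ + 1, 1, δ / 2, one_pos, hε₀pos, ?_⟩
  intro C hCT hNcard Minfl hMinfl Ω hNash hTie y hy
  obtain ⟨⟨⟨hmuInn, hmuIsum, hcons, hX⟩, hmu0⟩, hIBR, hCBR, _⟩ := hNash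
  set N : ℕ := C.card with hNdef
  have hNpos : 0 < N := by omega
  have hN1 : (1 : ℝ) ≤ (N : ℝ) := by exact_mod_cast hNpos
  have hMinfl' : (N : ℝ) < Minfl := by simpa using hMinfl
  have hMN1 : (1 : ℝ) < Minfl / (N : ℝ) := (one_lt_div (by positivity)).2 (by linarith)
  -- bounds on Bfun
  have hB : ∀ z ∈ C, ∀ y' ∈ C, c ≤ Bfun d f g Ω z y' ∧ Bfun d f g Ω z y' ≤ 1 := by
    intro z hz y' hy'
    have hxT : Ω.X z ∈ T := hX z hz
    have h1 : dist (Ω.X z) z ≤ Metric.diam T := Metric.dist_le_diam_of_mem hTbd hxT (hCT hz)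
    have h2 : dist (Ω.X z) y' ≤ Metric.diam T := Metric.dist_le_diam_of_mem hTbd hxT (hCT hy')
    have hg1 : g (Metric.diam T) ≤ g (dist (Ω.X z) z) :=
      hg_anti.antitoneOn (Set.mem_Ici.2 dist_nonneg) (Set.mem_Ici.2 hD0) h1
    have hf1 : f (Metric.diam T) ≤ f (dist (Ω.X z) y') :=
      hf_anti.antitoneOn (Set.mem_Ici.2 dist_nonneg) (Set.mem_Ici.2 hD0) h2
    obtain ⟨hgp, hgu⟩ := hg_rng _ (Set.mem_Ici.2 (dist_nonneg : (0:ℝ) ≤ dist (Ω.X z) z))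
    obtain ⟨hfp, hfu⟩ := hf_rng _ (Set.mem_Ici.2 (dist_nonneg : (0:ℝ) ≤ dist (Ω.X z) y'))
    constructor
    · unfold Bfun; nlinarith
    · unfold Bfun; nlinarith
  -- nonnegativity of the relevant I-values
  have hmuYnn : ∀ y' ∈ C, 0 ≤ Ω.muY y' := fun y' hy' => (hcons y' hy').2.1
  have hImuYnn : ∀ y' ∈ C, 0 ≤ I (Ω.muY y') := fun y' hy' => hInn _ (hmuYnn y' hy')
  have hImuInn : ∀ z ∈ C, 0 ≤ I (Ω.muI z) := fun z hz => hInn _ (hmuInn z hz)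
  -- Step 1: lower bound on ∑ I (muI z)
  have hSIlb : c * I 1 * ((N : ℝ) - 1) ≤ ∑ z ∈ C, I (Ω.muI z) := by
    by_cases h0 : (∑ y' ∈ C, Ω.muY y') = 0
    · -- tie-break case
      have huni := hTie h0
      have hSIeq : ∑ z ∈ C, I (Ω.muI z) = (N : ℝ) * I (Minfl / (N : ℝ)) := by
        rw [Finset.sum_congr rfl fun z hz => by rw [huni z hz]]
        rw [Finset.sum_const, nsmul_eq_mul, hNdef]
      have hII : I 1 ≤ I (Minfl / (N : ℝ)) :=
        hImono' (Set.mem_Ici.2 zero_le_one) (Set.mem_Ici.2 (by linarith)) hMN1.le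
      rw [hSIeq]
      have hNm : (0:ℝ) ≤ (N:ℝ) - 1 := by linarith
      have step1 : c * I 1 * ((N : ℝ) - 1) ≤ I 1 * ((N : ℝ) - 1) :=
        mul_le_mul_of_nonneg_right (mul_le_of_le_one_left hI1.le hc1) hNm
      have step2 : I 1 * ((N:ℝ) - 1) ≤ I 1 * (N:ℝ) :=
        mul_le_mul_of_nonneg_left (by linarith) hI1.le
      have step3 : I 1 * (N:ℝ) ≤ I (Minfl/(N:ℝ)) * (N:ℝ) :=
        mul_le_mul_of_nonneg_right hII (by linarith)
      linarith
    · -- some consumer follows the influencer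
      have hApos : 0 < ∑ y' ∈ C, I (Ω.muY y') := by
        obtain ⟨y₀, hy₀, hy₀ne⟩ := Finset.exists_ne_zero_of_sum_ne_zero h0
        refine Finset.sum_pos' hImuYnn ⟨y₀, hy₀, ?_⟩
        rw [← hI_zero]
        exact hI_mono (Set.mem_Ici.2 le_rfl) (Set.mem_Ici.2 (hmuYnn y₀ hy₀))
          (lt_of_le_of_ne (hmuYnn y₀ hy₀) (Ne.symm hy₀ne))
      set A : ℝ := ∑ y' ∈ C, I (Ω.muY y') with hAdef
      -- influencer best response against the uniform deviation
      have hBR := hIBR (fun _ => Minfl / (N : ℝ))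
        (fun z _ => by positivity)
        (by
          rw [Finset.sum_const, nsmul_eq_mul, ← hNdef]
          rw [mul_div_cancel₀ _ (by positivity : (N : ℝ) ≠ 0)])
      have hBR' : ∑ z ∈ C, ∑ y' ∈ C.erase z, Bfun d f g Ω z y' * I (Minfl / (N : ℝ)) * I (Ω.muY y')
          ≤ ∑ z ∈ C, ∑ y' ∈ C.erase z, Bfun d f g Ω z y' * I (Ω.muI z) * I (Ω.muY y') := by
        have h2 : rp * ∑ z ∈ C, ∑ y' ∈ C.erase z, Bfun d f g Ω z y' * I (Minfl / (N : ℝ)) * I (Ω.muY y')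
            ≤ rp * ∑ z ∈ C, ∑ y' ∈ C.erase z, Bfun d f g Ω z y' * I (Ω.muI z) * I (Ω.muY y') := hBR
        exact le_of_mul_le_mul_left h2 hrp
      have hregroup : ∀ m : E d → ℝ,
          ∑ z ∈ C, ∑ y' ∈ C.erase z, Bfun d f g Ω z y' * I (m z) * I (Ω.muY y')
          = ∑ z ∈ C, (∑ y' ∈ C.erase z, Bfun d f g Ω z y' * I (Ω.muY y')) * I (m z) := by
        intro m
        refine Finset.sum_congr rfl fun z hz => ?_
        rw [Finset.sum_mul]
        exact Finset.sum_congr rfl fun y' _ => by ring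
      rw [hregroup (fun _ => Minfl / (N : ℝ)), hregroup Ω.muI] at hBR'
      -- bounds on the weights w z
      have hwnn : ∀ z ∈ C, 0 ≤ ∑ y' ∈ C.erase z, Bfun d f g Ω z y' * I (Ω.muY y') := by
        intro z hz
        refine Finset.sum_nonneg fun y' hy' => mul_nonneg ?_ (hImuYnn y' (Finset.mem_of_mem_erase hy'))
        have := (hB z hz y' (Finset.mem_of_mem_erase hy')).1
        linarith
      have hwlb : ∀ z ∈ C, c * (A - I (Ω.muY z)) ≤ ∑ y' ∈ C.erase z, Bfun d f g Ω z y' * I (Ω.muY y') := by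
        intro z hz
        have h1 : ∑ y' ∈ C.erase z, c * I (Ω.muY y') ≤ ∑ y' ∈ C.erase z, Bfun d f g Ω z y' * I (Ω.muY y') :=
          Finset.sum_le_sum fun y' hy' =>
            mul_le_mul_of_nonneg_right (hB z hz y' (Finset.mem_of_mem_erase hy')).1
              (hImuYnn y' (Finset.mem_of_mem_erase hy'))
        rw [← Finset.mul_sum, Finset.sum_erase_eq_sub hz] at h1
        exact h1
      have hwub : ∀ z ∈ C, ∑ y' ∈ C.erase z, Bfun d f g Ω z y' * I (Ω.muY y') ≤ A := by
        intro z hz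
        have h1 : ∑ y' ∈ C.erase z, Bfun d f g Ω z y' * I (Ω.muY y') ≤ ∑ y' ∈ C.erase z, I (Ω.muY y') :=
          Finset.sum_le_sum fun y' hy' => by
            have h2 := (hB z hz y' (Finset.mem_of_mem_erase hy')).2
            have h3 := hImuYnn y' (Finset.mem_of_mem_erase hy')
            nlinarith
        refine h1.trans ?_
        rw [hAdef]
        exact Finset.sum_le_sum_of_subset_of_nonneg (Finset.erase_subset _ _)
          (fun y' hy' _ => hImuYnn y' hy')
      -- lower bound on the total weight
      have hWsum : c * ((N : ℝ) - 1) * A ≤ ∑ z ∈ C, ∑ y' ∈ C.erase z, Bfun d f g Ω z y' * I (Ω.muY y') := by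
        have h1 : ∑ z ∈ C, c * (A - I (Ω.muY z)) ≤ ∑ z ∈ C, ∑ y' ∈ C.erase z, Bfun d f g Ω z y' * I (Ω.muY y') :=
          Finset.sum_le_sum hwlb
        have h2 : ∑ z ∈ C, c * (A - I (Ω.muY z)) = c * ((N : ℝ) * A - A) := by
          rw [← Finset.mul_sum, Finset.sum_sub_distrib, Finset.sum_const, nsmul_eq_mul, ← hAdef, ← hNdef]
        rw [h2] at h1
        calc c * ((N : ℝ) - 1) * A = c * ((N : ℝ) * A - A) := by ring
          _ ≤ _ := h1
      -- chain of inequalities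
      have hII : I 1 ≤ I (Minfl / (N : ℝ)) :=
        hImono' (Set.mem_Ici.2 zero_le_one) (Set.mem_Ici.2 (by linarith)) hMN1.le
      have hchain1 : I 1 * (c * ((N : ℝ) - 1) * A)
          ≤ ∑ z ∈ C, (∑ y' ∈ C.erase z, Bfun d f g Ω z y' * I (Ω.muY y')) * I (Minfl / (N : ℝ)) := by
        rw [← Finset.sum_mul]
        have hwtot : 0 ≤ c * ((N : ℝ) - 1) * A := by
          have : (0:ℝ) ≤ (N : ℝ) - 1 := by linarith
          positivity
        calc I 1 * (c * ((N : ℝ) - 1) * A) = (c * ((N : ℝ) - 1) * A) * I 1 := by ring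
          _ ≤ (∑ z ∈ C, ∑ y' ∈ C.erase z, Bfun d f g Ω z y' * I (Ω.muY y')) * I (Minfl / (N : ℝ)) :=
            mul_le_mul hWsum hII hI1.le (le_trans hwtot hWsum)
      have hchain2 : ∑ z ∈ C, (∑ y' ∈ C.erase z, Bfun d f g Ω z y' * I (Ω.muY y')) * I (Ω.muI z)
          ≤ A * ∑ z ∈ C, I (Ω.muI z) := by
        rw [Finset.mul_sum]
        exact Finset.sum_le_sum fun z hz =>
          mul_le_mul_of_nonneg_right (hwub z hz) (hImuInn z hz)
      have hfinal : c * I 1 * ((N : ℝ) - 1) * A ≤ (∑ z ∈ C, I (Ω.muI z)) * A := by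
        calc c * I 1 * ((N : ℝ) - 1) * A = I 1 * (c * ((N : ℝ) - 1) * A) := by ring
          _ ≤ _ := le_trans hchain1 (le_trans hBR' hchain2)
          _ = (∑ z ∈ C, I (Ω.muI z)) * A := by ring
      exact le_of_mul_le_mul_right hfinal hApos
  -- Step 2: lower bound on S y
  have hSylb : c * ((∑ z ∈ C, I (Ω.muI z)) - 1) ≤ ∑ z ∈ C.erase y, Bfun d f g Ω z y * I (Ω.muI z) := by
    have h1 : ∑ z ∈ C.erase y, c * I (Ω.muI z) ≤ ∑ z ∈ C.erase y, Bfun d f g Ω z y * I (Ω.muI z) :=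
      Finset.sum_le_sum fun z hz =>
        mul_le_mul_of_nonneg_right (hB z (Finset.mem_of_mem_erase hz) y hy).1
          (hImuInn z (Finset.mem_of_mem_erase hz))
    rw [← Finset.mul_sum, Finset.sum_erase_eq_sub hy] at h1
    have h3 : I (Ω.muI y) ≤ 1 := (hIlt1 _ (hmuInn y hy)).le
    nlinarith
  -- Step 3: N is large enough that S y ≥ req
  have hreqS : req ≤ ∑ z ∈ C.erase y, Bfun d f g Ω z y * I (Ω.muI z) := by
    have hceil : (req / c + 1) / (c * I 1) ≤ (⌈(req / c + 1) / (c * I 1)⌉₊ : ℝ) := Nat.le_ceil _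
    have hNge : (⌈(req / c + 1) / (c * I 1)⌉₊ : ℝ) + 2 ≤ (N : ℝ) := by
      have : ⌈(req / c + 1) / (c * I 1)⌉₊ + 2 ≤ N := by omega
      exact_mod_cast this
    have hX1 : (req / c + 1) / (c * I 1) ≤ (N : ℝ) - 1 := by linarith
    have hX2 : req / c + 1 ≤ ((N : ℝ) - 1) * (c * I 1) := by
      have := mul_le_mul_of_nonneg_right hX1 (by positivity : (0:ℝ) ≤ c * I 1)
      rwa [div_mul_cancel₀ _ (by positivity : c * I 1 ≠ 0)] at this
    have hX3 : req ≤ c * (c * I 1 * ((N : ℝ) - 1) - 1) := by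
      have h4 : req / c ≤ c * I 1 * ((N : ℝ) - 1) - 1 := by linarith
      have h5 := mul_le_mul_of_nonneg_left h4 hc.le
      rwa [mul_div_cancel₀ _ (ne_of_gt hc)] at h5
    refine hX3.trans (le_trans ?_ hSylb)
    nlinarith
  -- Step 4: consumer best response
  have hCy := hCBR y hy (M / 2) (M / 2) (by linarith) (by linarith) (by linarith)
  have hUdev : Uc d f g I C rp r0 B0 (consDeviate d Ω y (fun _ => 0) (M / 2) (M / 2)) y
      = rp * ((∑ z ∈ C.erase y, Bfun d f g Ω z y * I (Ω.muI z)) * I (M / 2)) + r0 * B0 * I (M / 2) := by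
    simp only [Uc, consDeviate, Bfun, Function.update_self, eq_self_iff_true, if_true, hI_zero,
      mul_zero, Finset.sum_const_zero, add_zero]
    rw [Finset.sum_mul]
  have hUeq : Uc d f g I C rp r0 B0 Ω y
      = rp * ((∑ z ∈ C.erase y, Bfun d f g Ω z y * I (Ω.muI z)) * I (Ω.muY y)) + r0 * B0 * I (Ω.lam y) := by
    simp only [Uc]
    have hmid : ∑ z ∈ C.erase y, Bfun d f g Ω z y * I (Ω.mu z y) = 0 :=
      Finset.sum_eq_zero fun z hz => by rw [hmu0 y hy z hz, hI_zero, mul_zero]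
    rw [hmid, Finset.sum_mul]
    ring_nf
    congr 2
    exact Finset.sum_congr rfl fun _ _ => by ring
  rw [hUdev, hUeq] at hCy
  -- Step 5: conclude I (muY y) ≥ I(M/2)/2
  set S : ℝ := ∑ z ∈ C.erase y, Bfun d f g Ω z y * I (Ω.muI z) with hSdef
  have hSpos : 0 < S := lt_of_lt_of_le hreqpos hreqS
  have hlam1 : I (Ω.lam y) ≤ 1 := (hIlt1 _ (hcons y hy).2.2.1).le
  have hS2 : 2 * (r0 * B0) ≤ rp * (S * I (M / 2)) := by
    have e2 : rp * (req * I (M / 2)) = 2 * (r0 * B0) := by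
      rw [hreqdef]; field_simp
    rw [← e2]
    have := mul_le_mul_of_nonneg_right hreqS (le_of_lt hIhalf)
    nlinarith
  have hImuY : I (M / 2) / 2 ≤ I (Ω.muY y) := by
    nlinarith [mul_pos hrp hSpos, mul_pos hr0 hB0]
  -- Step 6: conclude
  by_contra hle
  push_neg at hle
  have hmono := hImono' (Set.mem_Ici.2 (hmuYnn y hy)) (Set.mem_Ici.2 hε₀pos.le) hle
  linarith
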